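/- Let f ∈ F on ℝ^d and β, β* ∈ ℝ^d. Then the LS-EM update satisfies M(β*, β) ∈ span{β, β*}. Moreover, if the angle ∠(β, β*) equals 0 or π/2 (i.e. β is parallel or orthogonal to β*), then M(β*, β) ∈ span{β}. -/

import Mathlib

open MeasureTheory Real Filter InnerProductGeometry
open scoped RealInnerProductSpace

noncomputable section

/-- Euclidean space `ℝ^d`. -/
abbrev E (d : ℕ) := EuclideanSpace ℝ (Fin d)

/-- The location-scale density `f_{β,σ}(x) = σ^{-d} f((x-β)/σ)` for the base log-concave
density `f(x) = (1/C) exp(-g(‖x‖₂))`. -/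
def densHD (d : ℕ) (g : ℝ → ℝ) (C σ : ℝ) (β x : E d) : ℝ :=
  (1 / σ ^ d) * ((1 / C) * Real.exp (-g (‖x - β‖ / σ)))

/-- `F_{β,σ}(x) = g(‖x+β‖₂/σ) - g(‖x-β‖₂/σ)`. -/
def FHD (d : ℕ) (g : ℝ → ℝ) (σ : ℝ) (β x : E d) : ℝ :=
  g (‖x + β‖ / σ) - g (‖x - β‖ / σ)

/-- The population LS-EM update `M(β*, β) = E_{X ~ f_{β*,σ}}[X tanh(F_{β,σ}(X)/2)]`. -/
def MHD (d : ℕ) (g : ℝ → ℝ) (C σ : ℝ) (βs β : E d) : E d :=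
  ∫ x : E d, (densHD d g C σ βs x * Real.tanh (FHD d g σ β x / 2)) • x

/-- Membership in the class `F` of rotation invariant log-concave densities on `ℝ^d`:
`f(x) = (1/C) exp(-g(‖x‖₂))` with `g` convex and strictly increasing on `[0,∞)`,
`g(0) = 0`, integrating to one and with unit variance in each coordinate. -/
structure InClassFHD (d : ℕ) (g : ℝ → ℝ) (C : ℝ) : Prop where
  convexOn : ConvexOn ℝ (Set.Ici (0 : ℝ)) g
  strictMonoOn : StrictMonoOn g (Set.Ici (0 : ℝ))
  g_zero : g 0 = 0
  C_pos : 0 < C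
  integral_one : ∫ x : E d, (1 / C) * Real.exp (-g ‖x‖) = 1
  coord_var_one : ∀ i : Fin d, ∫ x : E d, (x i) ^ 2 * ((1 / C) * Real.exp (-g ‖x‖)) = 1

/-- The regularity condition: differentiation under the integral sign is valid for the
integrals defining `M`, with respect to both parameters. -/
def RegularHD (d : ℕ) (g : ℝ → ℝ) (C σ : ℝ) : Prop :=
  ∀ βs β : E d,
    HasFDerivAt (fun z : E d => MHD d g C σ z β)
      (∫ x : E d,
        fderiv ℝ (fun z : E d =>
          (densHD d g C σ z x * Real.tanh (FHD d g σ β x / 2)) • x) βs) βs ∧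
    HasFDerivAt (fun b : E d => MHD d g C σ βs b)
      (∫ x : E d,
        fderiv ℝ (fun b : E d =>
          (densHD d g C σ βs x * Real.tanh (FHD d g σ b x / 2)) • x) β) β


/-- Symmetry lemma: if a linear isometry `e` fixes `βs` and transforms the `tanh` weight by a
scalar `s`, then `M = s • e M`. -/
lemma MHD_symm (d : ℕ) (g : ℝ → ℝ) (C σ : ℝ) (βs β : E d)
    (e : E d ≃ₗᵢ[ℝ] E d) (hβs : e βs = βs) (s : ℝ)
    (hs : ∀ x, Real.tanh (FHD d g σ β (e x) / 2) = s * Real.tanh (FHD d g σ β x / 2)) :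
    MHD d g C σ βs β = s • e (MHD d g C σ βs β) := by
  have hdens : ∀ x, densHD d g C σ βs (e x) = densHD d g C σ βs x := by
    intro x
    have h1 : ‖e x - βs‖ = ‖x - βs‖ := by
      rw [show e x - βs = e (x - βs) by rw [map_sub, hβs]]
      exact e.norm_map _
    simp [densHD, h1]
  calc MHD d g C σ βs β
      = ∫ x : E d, (densHD d g C σ βs (e x) * Real.tanh (FHD d g σ β (e x) / 2)) • (e x) := by
        rw [MHD]
        exact (MeasureTheory.integral_comp e
          fun y => (densHD d g C σ βs y * Real.tanh (FHD d g σ β y / 2)) • y).symm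
    _ = ∫ x : E d, s • (e.toLinearIsometry
          ((densHD d g C σ βs x * Real.tanh (FHD d g σ β x / 2)) • x)) := by
        congr 1; funext x
        rw [hdens, hs]
        show _ • e x = s • e _
        rw [e.map_smul, smul_smul, mul_left_comm]
    _ = s • e (MHD d g C σ βs β) := by
        rw [integral_smul, e.toLinearIsometry.integral_comp_comm]
        rfl

/-- LS-EM is 2-dimensional: `M(β*, β) ∈ span{β, β*}`; moreover if the
angle between `β` and `β*` is `0` or `π/2`, then `M(β*, β) ∈ span{β}`. -/
theorem stmt6 (d : ℕ) (g : ℝ → ℝ) (C σ : ℝ) (hσ : 0 < σ)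
    (hF : InClassFHD d g C) (βs β : E d) :
    MHD d g C σ βs β ∈ Submodule.span ℝ ({β, βs} : Set (E d)) ∧
    (β ≠ 0 → βs ≠ 0 → (angle β βs = 0 ∨ angle β βs = π / 2) →
      MHD d g C σ βs β ∈ Submodule.span ℝ ({β} : Set (E d))) := by
  set M := MHD d g C σ βs β with hM
  -- Part 1: M ∈ span {β, βs}
  have hβmem : β ∈ Submodule.span ℝ ({β, βs} : Set (E d)) :=
    Submodule.subset_span (Set.mem_insert _ _)
  have hβsmem : βs ∈ Submodule.span ℝ ({β, βs} : Set (E d)) :=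
    Submodule.subset_span (by simp)
  have part1 : M ∈ Submodule.span ℝ ({β, βs} : Set (E d)) := by
    set S := Submodule.span ℝ ({β, βs} : Set (E d)) with hS
    have heβ : Submodule.reflection S β = β := Submodule.reflection_mem_subspace_eq_self hβmem
    have heβs : Submodule.reflection S βs = βs := Submodule.reflection_mem_subspace_eq_self hβsmem
    have h1 := MHD_symm d g C σ βs β (Submodule.reflection S) heβs 1 (fun x => by
      have ha : ‖Submodule.reflection S x + β‖ = ‖x + β‖ := by
        rw [show Submodule.reflection S x + β = Submodule.reflection S (x + β) by rw [map_add, heβ]]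
        exact (Submodule.reflection S).norm_map _
      have hb : ‖Submodule.reflection S x - β‖ = ‖x - β‖ := by
        rw [show Submodule.reflection S x - β = Submodule.reflection S (x - β) by rw [map_sub, heβ]]
        exact (Submodule.reflection S).norm_map _
      rw [FHD, FHD, ha, hb, one_mul])
    rw [one_smul] at h1
    exact (Submodule.reflection_eq_self_iff M).mp h1.symm
  refine ⟨part1, ?_⟩
  intro hβ0 hβs0 hang
  rcases hang with hang | hang
  · -- angle 0 : βs is a positive multiple of β
    obtain ⟨-, r, -, hr⟩ := angle_eq_zero_iff.mp hang
    have : ({β, βs} : Set (E d)) ⊆ (Submodule.span ℝ ({β} : Set (E d)) : Set (E d)) := by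
      intro x hx
      rcases hx with rfl | h
      · exact Submodule.mem_span_singleton_self x
      · simp only [Set.mem_singleton_iff] at h
        subst h; rw [hr]
        exact Submodule.smul_mem _ _ (Submodule.mem_span_singleton_self β)
    exact Submodule.span_le.mpr this part1
  · -- angle π/2 : β ⟂ βs
    have hinner : ⟪β, βs⟫ = 0 := (inner_eq_zero_iff_angle_eq_pi_div_two β βs).mpr hang
    have hβorth : β ∈ (ℝ ∙ βs)ᗮ :=
      Submodule.mem_orthogonal_singleton_iff_inner_right.mpr
        (by rw [real_inner_comm]; exact hinner)
    have heβs : Submodule.reflection (ℝ ∙ βs) βs = βs :=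
      Submodule.reflection_mem_subspace_eq_self (Submodule.mem_span_singleton_self βs)
    have heβ : Submodule.reflection (ℝ ∙ βs) β = -β :=
      Submodule.reflection_mem_subspace_orthogonalComplement_eq_neg hβorth
    have h2 := MHD_symm d g C σ βs β (Submodule.reflection (ℝ ∙ βs)) heβs (-1) (fun x => by
      have ha : ‖Submodule.reflection (ℝ ∙ βs) x + β‖ = ‖x - β‖ := by
        rw [show Submodule.reflection (ℝ ∙ βs) x + β = Submodule.reflection (ℝ ∙ βs) (x - β) by
          rw [map_sub, heβ, sub_neg_eq_add]]
        exact (Submodule.reflection (ℝ ∙ βs)).norm_map _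
      have hb : ‖Submodule.reflection (ℝ ∙ βs) x - β‖ = ‖x + β‖ := by
        rw [show Submodule.reflection (ℝ ∙ βs) x - β = Submodule.reflection (ℝ ∙ βs) (x + β) by
          rw [map_add, heβ, ← sub_eq_add_neg]]
        exact (Submodule.reflection (ℝ ∙ βs)).norm_map _
      rw [FHD, FHD, ha, hb]
      rw [show g (‖x - β‖ / σ) - g (‖x + β‖ / σ)
            = -(g (‖x + β‖ / σ) - g (‖x - β‖ / σ)) by ring]
      rw [neg_div, Real.tanh_neg, neg_one_mul])
    have heM : Submodule.reflection (ℝ ∙ βs) M = -M := by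
      rw [neg_one_smul] at h2
      have h3 : -M = Submodule.reflection (ℝ ∙ βs) M := by simpa using congrArg Neg.neg h2
      exact h3.symm
    -- hence M ∈ (ℝ ∙ βs)ᗮ
    have hMorth : M ∈ (ℝ ∙ βs)ᗮ := by
      rw [← Submodule.orthogonalProjectionOnto_eq_zero_iff]
      have happ := Submodule.reflection_apply (K := ℝ ∙ βs) M
      rw [heM] at happ
      have h0 : (2 : ℕ) • ((Submodule.orthogonalProjectionOnto (ℝ ∙ βs) M : E d)) = 0 := by
        rw [eq_sub_iff_add_eq] at happ
        simpa using happ.symm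
      have h0' : (Submodule.orthogonalProjectionOnto (ℝ ∙ βs) M : E d) = 0 := by
        have h2' : ((2 : ℝ)) • ((Submodule.orthogonalProjectionOnto (ℝ ∙ βs) M : E d)) = 0 := by
          rw [show ((2:ℝ) • ((Submodule.orthogonalProjectionOnto (ℝ ∙ βs) M : E d)))
              = (2 : ℕ) • ((Submodule.orthogonalProjectionOnto (ℝ ∙ βs) M : E d)) by
            simp [two_smul]]
          exact h0
        exact (smul_eq_zero.mp h2').resolve_left (by norm_num)
      exact Subtype.ext h0'
    have hMinner : ⟪βs, M⟫ = 0 :=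
      Submodule.mem_orthogonal_singleton_iff_inner_right.mp hMorth
    obtain ⟨a, b, hab⟩ := Submodule.mem_span_pair.mp part1
    have hb0 : b = 0 := by
      have : ⟪βs, a • β + b • βs⟫ = 0 := by rw [hab]; exact hMinner
      rw [inner_add_right, real_inner_smul_right, real_inner_smul_right,
        real_inner_comm β βs, hinner, mul_zero, zero_add,
        real_inner_self_eq_norm_sq] at this
      have hn : ‖βs‖ ^ 2 ≠ 0 := pow_ne_zero _ (norm_ne_zero_iff.mpr hβs0)
      exact (mul_eq_zero.mp this).resolve_right hn
    rw [Submodule.mem_span_singleton]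
    exact ⟨a, by rw [← hab, hb0, zero_smul, add_zero]⟩
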